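/- For every m ∈ ℕ, ∫_{ℝ³} φ_m(x)·φ_0(y)·φ_0(z)·φ_m((2x+2y−z)/3)·φ_0((−x+2y+2z)/3)·φ_0((2x−y+2z)/3) dx dy dz = (2/3)^m, where φ_m denotes the m-th Hermite function. -/

import Mathlib

open scoped BigOperators
open MeasureTheory

/-- The physicists' Hermite polynomial `H_m(x) = 2^{m/2}·He_m(x√2)`, where `He_m` is
the probabilists' Hermite polynomial. -/
noncomputable def physHermite (m : ℕ) (x : ℝ) : ℝ :=
  (2 : ℝ) ^ ((m : ℝ) / 2) * Polynomial.aeval (x * Real.sqrt 2) (Polynomial.hermite m)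

/-- The `m`-th Hermite function `φ_m(x) = (2^m·m!·√π)^{−1/2}·H_m(x)·e^{−x²/2}`. -/
noncomputable def hermiteFun (m : ℕ) (x : ℝ) : ℝ :=
  ((2 : ℝ) ^ m * (m.factorial : ℝ) * Real.sqrt Real.pi) ^ (-(1 / 2 : ℝ)) *
    physHermite m x * Real.exp (-x ^ 2 / 2)

open Real

section HermiteAux

lemma two_step {P : ℕ → Prop} (h0 : P 0) (h1 : P 1)
    (hstep : ∀ n, P n → P (n + 1) → P (n + 2)) : ∀ n, P n := by
  have h : ∀ n, P n ∧ P (n + 1) := by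
    intro n
    induction n with
    | zero => exact ⟨h0, h1⟩
    | succ n ih => exact ⟨ih.2, hstep n ih.1 ih.2⟩
  exact fun n => (h n).1

noncomputable def Hf : ℕ → ℝ → ℝ
  | 0 => fun _ => 1
  | 1 => fun x => 2 * x
  | (n + 2) => fun x => 2 * x * Hf (n + 1) x - 2 * ((n : ℝ) + 1) * Hf n x

lemma Hf_zero (x : ℝ) : Hf 0 x = 1 := rfl
lemma Hf_one (x : ℝ) : Hf 1 x = 2 * x := rfl
lemma Hf_add_two (n : ℕ) (x : ℝ) :
    Hf (n + 2) x = 2 * x * Hf (n + 1) x - 2 * ((n : ℝ) + 1) * Hf n x := rfl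

noncomputable def dH : ℕ → ℝ → ℝ
  | 0 => fun _ => 0
  | (n + 1) => fun x => 2 * ((n : ℝ) + 1) * Hf n x

lemma dH_zero (x : ℝ) : dH 0 x = 0 := rfl
lemma dH_succ (n : ℕ) (x : ℝ) : dH (n + 1) x = 2 * ((n : ℝ) + 1) * Hf n x := rfl

lemma Hf_succ_eq (n : ℕ) (x : ℝ) : Hf (n + 1) x = 2 * x * Hf n x - dH n x := by
  cases n with
  | zero => simp [Hf_zero, Hf_one, dH_zero]
  | succ n => rw [Hf_add_two, dH_succ]

lemma Hf_hasDerivAt : ∀ n, ∀ x : ℝ, HasDerivAt (Hf n) (dH n x) x := by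
  refine two_step ?_ ?_ ?_
  · intro x
    rw [dH_zero]; exact hasDerivAt_const x (1 : ℝ)
  · intro x
    have : HasDerivAt (fun y : ℝ => 2 * y) 2 x := by
      simpa using (hasDerivAt_id x).const_mul 2
    rw [show dH 1 x = 2 by simp [dH_succ, Hf_zero]]; exact this
  · intro n ih0 ih1 x
    have h1 : HasDerivAt (fun y : ℝ => 2 * y * Hf (n + 1) y)
        (2 * Hf (n + 1) x + 2 * x * dH (n + 1) x) x := by
      have := ((hasDerivAt_id x).const_mul 2).mul (ih1 x)
      simp only [id_eq, mul_one] at this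
      exact this
    have h2 : HasDerivAt (fun y : ℝ => 2 * ((n : ℝ) + 1) * Hf n y)
        (2 * ((n : ℝ) + 1) * dH n x) x := (ih0 x).const_mul _
    have h3 := h1.fun_sub h2
    have harg : (fun y : ℝ => 2 * y * Hf (n + 1) y - 2 * ((n : ℝ) + 1) * Hf n y)
        = Hf (n + 2) := by
      funext y; rw [Hf_add_two]
    rw [harg] at h3
    refine h3.congr_deriv ?_
    rw [dH_succ, dH_succ, Hf_succ_eq n x]
    push_cast
    ring

lemma Hf_differentiable (n : ℕ) : Differentiable ℝ (Hf n) :=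
  fun x => (Hf_hasDerivAt n x).differentiableAt

lemma Hf_continuous (n : ℕ) : Continuous (Hf n) :=
  (Hf_differentiable n).continuous

lemma hermite_derivative : ∀ n : ℕ,
    Polynomial.derivative (Polynomial.hermite (n + 1)) =
      Polynomial.C ((n : ℤ) + 1) * Polynomial.hermite n := by
  intro n
  induction n with
  | zero =>
    simp [Polynomial.hermite_one, Polynomial.hermite_zero]
  | succ n ih =>
    rw [Polynomial.hermite_succ (n + 1), Polynomial.derivative_sub, Polynomial.derivative_mul,
      Polynomial.derivative_X, one_mul, ih, Polynomial.derivative_mul, Polynomial.derivative_C,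
      zero_mul, zero_add, Polynomial.hermite_succ n]
    push_cast [Polynomial.C_add, Polynomial.C_1]
    ring

lemma aeval_hermite_add_two (n : ℕ) (y : ℝ) :
    Polynomial.aeval y (Polynomial.hermite (n + 2)) =
      y * Polynomial.aeval y (Polynomial.hermite (n + 1)) -
        ((n : ℝ) + 1) * Polynomial.aeval y (Polynomial.hermite n) := by
  rw [Polynomial.hermite_succ (n + 1), hermite_derivative n, map_sub, map_mul, map_mul,
    Polynomial.aeval_X, Polynomial.aeval_C]
  push_cast
  ring

lemma rpow_half_mul_sqrt_two : (2 : ℝ) ^ ((1 : ℝ) / 2) * Real.sqrt 2 = 2 := by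
  rw [← Real.sqrt_eq_rpow]
  exact Real.mul_self_sqrt (by norm_num)

lemma physHermite_eq_Hf : ∀ n, ∀ x : ℝ, physHermite n x = Hf n x := by
  refine two_step ?_ ?_ ?_
  · intro x
    simp [physHermite, Polynomial.hermite_zero, Hf_zero]
  · intro x
    rw [physHermite, Polynomial.hermite_one, Polynomial.aeval_X, Hf_one]
    push_cast
    rw [mul_comm x (Real.sqrt 2), ← mul_assoc]
    rw [show ((1:ℝ)/2) = (1:ℝ)/2 from rfl]
    rw [rpow_half_mul_sqrt_two]
  · intro n ih0 ih1 x
    rw [Hf_add_two, ← ih0 x, ← ih1 x, physHermite, physHermite, physHermite,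
      aeval_hermite_add_two]
    have e2 : ((((n : ℕ) : ℝ) + 2) / 2) = ((n : ℝ) / 2) + 1 := by push_cast; ring
    have e1 : ((((n : ℕ) : ℝ) + 1) / 2) = ((n : ℝ) / 2) + 1/2 := by push_cast; ring
    push_cast
    rw [e2, e1, Real.rpow_add (by norm_num : (0:ℝ) < 2), Real.rpow_add (by norm_num : (0:ℝ) < 2),
      Real.rpow_one]
    rw [show ((2:ℝ) ^ ((1:ℝ)/2)) = Real.sqrt 2 from (Real.sqrt_eq_rpow 2).symm]
    ring

lemma pow_le_exp_quarter (n : ℕ) {t : ℝ} (ht : 0 ≤ t) :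
    t ^ n ≤ (1 + 4 ^ n * n.factorial) * Real.exp (t ^ 2 / 4) := by
  have hexp : (1 : ℝ) ≤ Real.exp (t ^ 2 / 4) :=
    Real.one_le_exp (by positivity)
  have hco : (1 : ℝ) ≤ 1 + 4 ^ n * n.factorial := by
    have : (0:ℝ) ≤ 4 ^ n * n.factorial := by positivity
    linarith
  rcases le_total t 1 with h | h
  · calc t ^ n ≤ 1 ^ n := pow_le_pow_left₀ ht h n
    _ = 1 := one_pow n
    _ ≤ (1 + 4 ^ n * n.factorial) * Real.exp (t ^ 2 / 4) := by nlinarith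
  · have h2 : t ^ n ≤ t ^ (2 * n) := pow_le_pow_right₀ h (by omega)
    have h3 : t ^ (2 * n) = 4 ^ n * (t ^ 2 / 4) ^ n := by
      rw [pow_mul, ← mul_pow]
      congr 1
      ring
    have h4 : (t ^ 2 / 4) ^ n ≤ n.factorial * Real.exp (t ^ 2 / 4) := by
      have := Real.pow_div_factorial_le_exp (x := t ^ 2 / 4) (by positivity) n
      rw [div_le_iff₀ (by positivity : (0:ℝ) < n.factorial)] at this
      linarith [this]
    calc t ^ n ≤ 4 ^ n * (t ^ 2 / 4) ^ n := by rw [← h3]; exact h2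
    _ ≤ 4 ^ n * (n.factorial * Real.exp (t ^ 2 / 4)) := by
        apply mul_le_mul_of_nonneg_left h4 (by positivity)
    _ ≤ (1 + 4 ^ n * n.factorial) * Real.exp (t ^ 2 / 4) := by nlinarith

lemma Hf_poly_bound : ∀ n, ∀ s : ℝ, |Hf n s| ≤ (2 * (|s| + n + 1)) ^ n := by
  refine two_step ?_ ?_ ?_
  · intro s; simp [Hf_zero]
  · intro s
    rw [Hf_one, abs_mul, abs_two, pow_one]
    have := abs_nonneg s
    nlinarith
  · intro n ih0 ih1 s
    have hs := abs_nonneg s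
    have hD : (0:ℝ) ≤ 2 * (|s| + n + 1) := by positivity
    have hD1 : 2 * (|s| + (n:ℝ) + 1) ≤ 2 * (|s| + (n+1:ℕ) + 1) := by push_cast; nlinarith
    have hD2 : 2 * (|s| + ((n:ℕ)+1:ℕ) + 1) ≤ 2 * (|s| + ((n:ℕ)+2:ℕ) + 1) := by push_cast; nlinarith
    set D : ℝ := 2 * (|s| + ((n:ℕ)+2:ℕ) + 1) with hDdef
    have hDpos : (1:ℝ) ≤ D := by simp only [hDdef]; push_cast; nlinarith
    have h1 : |Hf (n+1) s| ≤ D ^ (n+1) := by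
      refine (ih1 s).trans (pow_le_pow_left₀ (by positivity) ?_ _)
      simp only [hDdef]; push_cast; nlinarith
    have h0 : |Hf n s| ≤ D ^ n := by
      refine (ih0 s).trans (pow_le_pow_left₀ hD ?_ _)
      push_cast
      nlinarith
    have hDn : D ^ n ≤ D ^ (n+1) := pow_le_pow_right₀ hDpos (by omega)
    rw [Hf_add_two]
    have habs : |2 * s * Hf (n+1) s - 2 * ((n:ℝ) + 1) * Hf n s|
        ≤ 2 * |s| * |Hf (n+1) s| + 2 * ((n:ℝ)+1) * |Hf n s| := by
      refine (abs_sub _ _).trans ?_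
      rw [abs_mul, abs_mul, abs_mul, abs_mul, abs_two]
      have : |((n:ℝ) + 1)| = (n:ℝ) + 1 := abs_of_nonneg (by positivity)
      rw [this]
    calc |2 * s * Hf (n+1) s - 2 * ((n:ℝ) + 1) * Hf n s|
        ≤ 2 * |s| * |Hf (n+1) s| + 2 * ((n:ℝ)+1) * |Hf n s| := habs
    _ ≤ 2 * |s| * D ^ (n+1) + 2 * ((n:ℝ)+1) * D ^ (n+1) := by
        have g1 : 2 * |s| * |Hf (n+1) s| ≤ 2 * |s| * D ^ (n+1) :=
          mul_le_mul_of_nonneg_left h1 (by positivity)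
        have g2 : 2 * ((n:ℝ)+1) * |Hf n s| ≤ 2 * ((n:ℝ)+1) * D ^ (n+1) :=
          mul_le_mul_of_nonneg_left (h0.trans hDn) (by positivity)
        linarith
    _ = (2 * |s| + 2 * ((n:ℝ)+1)) * D ^ (n+1) := by ring
    _ ≤ D * D ^ (n+1) := by
        apply mul_le_mul_of_nonneg_right ?_ (by positivity)
        simp only [hDdef]; push_cast; nlinarith
    _ = D ^ (n+2) := by ring

lemma Hf_exp_bound (n : ℕ) : ∃ C : ℝ, 0 ≤ C ∧ ∀ s : ℝ,
    |Hf n s| ≤ C * Real.exp (s ^ 2 / 4) := by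
  refine ⟨(2 * ((n:ℝ)+1)) ^ n * 2 ^ n * (2 + 4 ^ n * n.factorial), by positivity, fun s => ?_⟩
  set t := |s| with htdef
  have ht : 0 ≤ t := abs_nonneg s
  have hst : s ^ 2 = t ^ 2 := (sq_abs s).symm
  have b1 : |Hf n s| ≤ (2 * (t + n + 1)) ^ n := Hf_poly_bound n s
  have b2 : (2 * (t + n + 1)) ^ n ≤ (2 * ((n:ℝ)+1)) ^ n * (1 + t) ^ n := by
    rw [← mul_pow]
    apply pow_le_pow_left₀ (by positivity)
    nlinarith
  have b3 : (1 + t) ^ n ≤ 2 ^ n * (1 + t ^ n) := by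
    rcases le_total t 1 with h | h
    · calc (1 + t) ^ n ≤ 2 ^ n := pow_le_pow_left₀ (by positivity) (by linarith) n
      _ ≤ 2 ^ n * (1 + t ^ n) := by nlinarith [pow_nonneg ht n, pow_pos (show (0:ℝ) < 2 by norm_num) n]
    · calc (1 + t) ^ n ≤ (2 * t) ^ n := pow_le_pow_left₀ (by positivity) (by linarith) n
      _ = 2 ^ n * t ^ n := mul_pow 2 t n
      _ ≤ 2 ^ n * (1 + t ^ n) := by nlinarith [pow_pos (show (0:ℝ) < 2 by norm_num) n]
  have b4 : 1 + t ^ n ≤ (2 + 4 ^ n * n.factorial) * Real.exp (s ^ 2 / 4) := by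
    have he : (1:ℝ) ≤ Real.exp (s ^ 2 / 4) := Real.one_le_exp (by positivity)
    have := pow_le_exp_quarter n ht
    rw [← hst] at this
    nlinarith
  calc |Hf n s| ≤ (2 * (t + n + 1)) ^ n := b1
  _ ≤ (2 * ((n:ℝ)+1)) ^ n * (1 + t) ^ n := b2
  _ ≤ (2 * ((n:ℝ)+1)) ^ n * (2 ^ n * (1 + t ^ n)) := by
      apply mul_le_mul_of_nonneg_left b3 (by positivity)
  _ ≤ (2 * ((n:ℝ)+1)) ^ n * (2 ^ n * ((2 + 4 ^ n * n.factorial) * Real.exp (s ^ 2 / 4))) := by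
      apply mul_le_mul_of_nonneg_left ?_ (by positivity)
      apply mul_le_mul_of_nonneg_left b4 (by positivity)
  _ = (2 * ((n:ℝ)+1)) ^ n * 2 ^ n * (2 + 4 ^ n * n.factorial) * Real.exp (s ^ 2 / 4) := by ring

lemma integrable_of_le_gauss {f : ℝ → ℝ} (hc : Continuous f) {C : ℝ}
    (h : ∀ t, |f t| ≤ C * Real.exp (-(t ^ 2) / 4)) : Integrable f := by
  have hg : Integrable (fun t : ℝ => C * Real.exp (-(t ^ 2) / 4)) := by
    have h1 : Integrable (fun t : ℝ => Real.exp (-(1/4 : ℝ) * t ^ 2)) :=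
      integrable_exp_neg_mul_sq (by norm_num)
    have h2 : (fun t : ℝ => C * Real.exp (-(t ^ 2) / 4))
        = fun t : ℝ => C * Real.exp (-(1/4 : ℝ) * t ^ 2) := by
      funext t; ring_nf
    rw [h2]
    exact h1.const_mul C
  refine hg.mono' hc.aestronglyMeasurable ?_
  filter_upwards with t
  rw [Real.norm_eq_abs]
  exact h t

lemma sq_arg_le {a c t : ℝ} (ha : a ^ 2 ≤ 1) : (a * t + c) ^ 2 ≤ 2 * t ^ 2 + 2 * c ^ 2 := by
  have h1 : a ^ 2 * t ^ 2 ≤ t ^ 2 := by nlinarith [sq_nonneg t]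
  nlinarith [sq_nonneg (a * t - c)]

lemma abs_le_exp_quarter (t : ℝ) : |t| ≤ 5 * Real.exp (t ^ 2 / 4) := by
  have := pow_le_exp_quarter 1 (abs_nonneg t)
  simp only [pow_one, Nat.factorial_one, Nat.cast_one, mul_one] at this
  calc |t| ≤ (1 + 4) * Real.exp (|t| ^ 2 / 4) := by
        convert this using 3 <;> norm_num
  _ = 5 * Real.exp (t ^ 2 / 4) := by rw [sq_abs]; norm_num

lemma integrable_Hf_gauss (n : ℕ) (a c : ℝ) (ha : a ^ 2 ≤ 1) :
    Integrable (fun t => Hf n (a * t + c) * Real.exp (-t ^ 2)) := by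
  obtain ⟨C, hC0, hC⟩ := Hf_exp_bound n
  have hcont : Continuous fun t => Hf n (a * t + c) * Real.exp (-t ^ 2) := by
    apply Continuous.mul
    · exact (Hf_continuous n).comp (by continuity)
    · exact Real.continuous_exp.comp (by continuity)
  refine integrable_of_le_gauss hcont (C := C * Real.exp (c ^ 2 / 2)) fun t => ?_
  rw [abs_mul, abs_of_nonneg (Real.exp_nonneg _)]
  have key : (a * t + c) ^ 2 / 4 + (-t ^ 2) ≤ c ^ 2 / 2 + (-(t ^ 2) / 4) := by
    have := sq_arg_le (t := t) (c := c) ha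
    nlinarith [sq_nonneg t]
  calc |Hf n (a * t + c)| * Real.exp (-t ^ 2)
      ≤ (C * Real.exp ((a * t + c) ^ 2 / 4)) * Real.exp (-t ^ 2) :=
        mul_le_mul_of_nonneg_right (hC _) (Real.exp_nonneg _)
  _ = C * Real.exp ((a * t + c) ^ 2 / 4 + (-t ^ 2)) := by rw [Real.exp_add]; ring
  _ ≤ C * Real.exp (c ^ 2 / 2 + (-(t ^ 2) / 4)) := by
      apply mul_le_mul_of_nonneg_left (Real.exp_le_exp.mpr key) hC0
  _ = (C * Real.exp (c ^ 2 / 2)) * Real.exp (-(t ^ 2) / 4) := by rw [Real.exp_add]; ring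

lemma integrable_t_Hf_gauss (n : ℕ) (a c : ℝ) (ha : a ^ 2 ≤ 1) :
    Integrable (fun t => t * (Hf n (a * t + c) * Real.exp (-t ^ 2))) := by
  obtain ⟨C, hC0, hC⟩ := Hf_exp_bound n
  have hcont : Continuous fun t => t * (Hf n (a * t + c) * Real.exp (-t ^ 2)) := by
    apply continuous_id.mul
    apply Continuous.mul
    · exact (Hf_continuous n).comp (by continuity)
    · exact Real.continuous_exp.comp (by continuity)
  refine integrable_of_le_gauss hcont (C := 5 * C * Real.exp (c ^ 2 / 2)) fun t => ?_
  rw [abs_mul, abs_mul, abs_of_nonneg (Real.exp_nonneg _)]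
  have key : t ^ 2 / 4 + ((a * t + c) ^ 2 / 4 + (-t ^ 2)) ≤ c ^ 2 / 2 + (-(t ^ 2) / 4) := by
    have := sq_arg_le (t := t) (c := c) ha
    nlinarith [sq_nonneg t]
  calc |t| * (|Hf n (a * t + c)| * Real.exp (-t ^ 2))
      ≤ (5 * Real.exp (t ^ 2 / 4)) * ((C * Real.exp ((a * t + c) ^ 2 / 4)) * Real.exp (-t ^ 2)) := by
        apply mul_le_mul (abs_le_exp_quarter t)
        · exact mul_le_mul_of_nonneg_right (hC _) (Real.exp_nonneg _)
        · positivity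
        · positivity
  _ = 5 * C * Real.exp (t ^ 2 / 4 + ((a * t + c) ^ 2 / 4 + (-t ^ 2))) := by
      rw [Real.exp_add, Real.exp_add]; ring
  _ ≤ 5 * C * Real.exp (c ^ 2 / 2 + (-(t ^ 2) / 4)) := by
      apply mul_le_mul_of_nonneg_left (Real.exp_le_exp.mpr key) (by positivity)
  _ = (5 * C * Real.exp (c ^ 2 / 2)) * Real.exp (-(t ^ 2) / 4) := by rw [Real.exp_add]; ring

lemma gauss_integral : ∫ t : ℝ, Real.exp (-t ^ 2) = Real.sqrt π := by
  simpa using integral_gaussian 1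

lemma integrable_gauss : Integrable (fun t : ℝ => Real.exp (-t ^ 2)) := by
  have := integrable_Hf_gauss 0 0 0 (by norm_num)
  simpa [Hf_zero] using this

lemma integrable_t_gauss : Integrable (fun t : ℝ => t * Real.exp (-t ^ 2)) := by
  have := integrable_t_Hf_gauss 0 0 0 (by norm_num)
  simpa [Hf_zero] using this

lemma integral_t_gauss : ∫ t : ℝ, t * Real.exp (-t ^ 2) = 0 := by
  have hd : ∀ t : ℝ, HasDerivAt (fun t : ℝ => Real.exp (-t ^ 2))
      ((-2) * (t * Real.exp (-t ^ 2))) t := by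
    intro t
    have h1 : HasDerivAt (fun t : ℝ => -t ^ 2) (-(2 * t)) t := by
      simpa using ((hasDerivAt_pow 2 t)).fun_neg
    have := h1.exp
    convert this using 1
    ring
  have h0 := integral_eq_zero_of_hasDerivAt_of_integrable hd
    (integrable_t_gauss.const_mul (-2)) integrable_gauss
  rw [integral_const_mul] at h0
  linarith [h0]

lemma hasDerivAt_Hf_affine (n : ℕ) (a c t : ℝ) :
    HasDerivAt (fun t => Hf n (a * t + c)) (dH n (a * t + c) * a) t := by
  have h1 : HasDerivAt (fun t : ℝ => a * t + c) a t := by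
    simpa using ((hasDerivAt_id t).const_mul a).add_const c
  exact (Hf_hasDerivAt n (a * t + c)).comp t h1

lemma hasDerivAt_gauss (t : ℝ) :
    HasDerivAt (fun t : ℝ => Real.exp (-t ^ 2)) (Real.exp (-t ^ 2) * (-(2 * t))) t := by
  have h1 : HasDerivAt (fun t : ℝ => -t ^ 2) (-(2 * t)) t := by
    simpa using ((hasDerivAt_pow 2 t)).fun_neg
  exact h1.exp

lemma integral_t_Hf (n : ℕ) (a c : ℝ) (ha : a ^ 2 ≤ 1) :
    ∫ t : ℝ, t * (Hf (n + 1) (a * t + c) * Real.exp (-t ^ 2))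
      = a * ((n : ℝ) + 1) * ∫ t : ℝ, Hf n (a * t + c) * Real.exp (-t ^ 2) := by
  set f' : ℝ → ℝ := fun t =>
    (a * (2 * ((n : ℝ) + 1))) * (Hf n (a * t + c) * Real.exp (-t ^ 2)) -
      2 * (t * (Hf (n + 1) (a * t + c) * Real.exp (-t ^ 2))) with hf'def
  have hd : ∀ t : ℝ, HasDerivAt (fun t => Hf (n + 1) (a * t + c) * Real.exp (-t ^ 2)) (f' t) t := by
    intro t
    have := (hasDerivAt_Hf_affine (n + 1) a c t).fun_mul (hasDerivAt_gauss t)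
    refine this.congr_deriv ?_
    rw [hf'def, dH_succ]
    push_cast
    ring
  have hint : Integrable f' :=
    ((integrable_Hf_gauss n a c ha).const_mul _).sub
      ((integrable_t_Hf_gauss (n + 1) a c ha).const_mul 2)
  have h0 := integral_eq_zero_of_hasDerivAt_of_integrable hd hint
    (integrable_Hf_gauss (n + 1) a c ha)
  rw [hf'def] at h0
  rw [integral_sub ((integrable_Hf_gauss n a c ha).const_mul _)
    ((integrable_t_Hf_gauss (n + 1) a c ha).const_mul 2),
    integral_const_mul, integral_const_mul] at h0
  linarith [h0]

lemma J_eq : ∀ n : ℕ, ∀ a b s : ℝ, a ^ 2 + b ^ 2 = 1 →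
    ∫ t : ℝ, Hf n (a * t + b * s) * Real.exp (-t ^ 2)
      = Real.sqrt π * b ^ n * Hf n s := by
  refine two_step ?_ ?_ ?_
  · intro a b s h
    simp only [Hf_zero, one_mul, pow_zero, mul_one]
    rw [gauss_integral]
  · intro a b s h
    have hrw : (fun t : ℝ => Hf 1 (a * t + b * s) * Real.exp (-t ^ 2))
        = fun t : ℝ => (2 * a) * (t * Real.exp (-t ^ 2)) + (2 * (b * s)) * Real.exp (-t ^ 2) := by
      funext t; rw [Hf_one]; ring
    rw [hrw, integral_add (integrable_t_gauss.const_mul _) (integrable_gauss.const_mul _),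
      integral_const_mul, integral_const_mul, integral_t_gauss, gauss_integral, Hf_one]
    ring
  · intro n ih0 ih1 a b s h
    have ha : a ^ 2 ≤ 1 := by nlinarith [sq_nonneg b]
    have hrw : (fun t : ℝ => Hf (n + 2) (a * t + b * s) * Real.exp (-t ^ 2))
        = fun t : ℝ => (2 * a) * (t * (Hf (n + 1) (a * t + b * s) * Real.exp (-t ^ 2))) +
          ((2 * (b * s)) * (Hf (n + 1) (a * t + b * s) * Real.exp (-t ^ 2)) -
            (2 * ((n : ℝ) + 1)) * (Hf n (a * t + b * s) * Real.exp (-t ^ 2))) := by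
      funext t; rw [Hf_add_two]; ring
    have h1 : Integrable (fun t : ℝ =>
        (2 * a) * (t * (Hf (n + 1) (a * t + b * s) * Real.exp (-t ^ 2)))) :=
      (integrable_t_Hf_gauss (n + 1) a (b * s) ha).const_mul _
    have h2a : Integrable (fun t : ℝ =>
        (2 * (b * s)) * (Hf (n + 1) (a * t + b * s) * Real.exp (-t ^ 2))) :=
      (integrable_Hf_gauss (n + 1) a (b * s) ha).const_mul _
    have h2b : Integrable (fun t : ℝ =>
        (2 * ((n : ℝ) + 1)) * (Hf n (a * t + b * s) * Real.exp (-t ^ 2))) :=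
      (integrable_Hf_gauss n a (b * s) ha).const_mul _
    have h2 : Integrable (fun t : ℝ =>
        (2 * (b * s)) * (Hf (n + 1) (a * t + b * s) * Real.exp (-t ^ 2)) -
          (2 * ((n : ℝ) + 1)) * (Hf n (a * t + b * s) * Real.exp (-t ^ 2))) := h2a.sub h2b
    rw [hrw, integral_add h1 h2]
    rw [integral_sub h2a h2b,
      integral_const_mul, integral_const_mul, integral_const_mul,
      integral_t_Hf n a (b * s) ha, ih0 a b s h, ih1 a b s h, Hf_add_two]
    linear_combination (2 * ((n : ℝ) + 1) * Real.sqrt π * b ^ n * Hf n s) * h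

lemma integrable_HfHf (i j : ℕ) :
    Integrable (fun x : ℝ => Hf i x * Hf j x * Real.exp (-x ^ 2)) := by
  obtain ⟨C, hC0, hC⟩ := Hf_exp_bound i
  obtain ⟨D, hD0, hD⟩ := Hf_exp_bound j
  have hcont : Continuous fun x : ℝ => Hf i x * Hf j x * Real.exp (-x ^ 2) := by
    exact ((Hf_continuous i).mul (Hf_continuous j)).mul
      (Real.continuous_exp.comp (by continuity))
  refine integrable_of_le_gauss hcont (C := C * D) fun x => ?_
  rw [abs_mul, abs_mul, abs_of_nonneg (Real.exp_nonneg _)]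
  calc |Hf i x| * |Hf j x| * Real.exp (-x ^ 2)
      ≤ (C * Real.exp (x ^ 2 / 4)) * (D * Real.exp (x ^ 2 / 4)) * Real.exp (-x ^ 2) := by
        apply mul_le_mul_of_nonneg_right ?_ (Real.exp_nonneg _)
        exact mul_le_mul (hC x) (hD x) (abs_nonneg _) (by positivity)
  _ = (C * D) * Real.exp (x ^ 2 / 4 + x ^ 2 / 4 + (-x ^ 2)) := by
      rw [Real.exp_add, Real.exp_add]; ring
  _ ≤ (C * D) * Real.exp (-(x ^ 2) / 4) := by
      apply mul_le_mul_of_nonneg_left (Real.exp_le_exp.mpr (by nlinarith [sq_nonneg x])) (by positivity)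

lemma K_eq : ∀ n : ℕ, ∫ x : ℝ, Hf n x * Hf n x * Real.exp (-x ^ 2)
    = 2 ^ n * (n.factorial : ℝ) * Real.sqrt π := by
  intro n
  induction n with
  | zero => simp only [Hf_zero, one_mul, pow_zero, Nat.factorial_zero, Nat.cast_one, mul_one]
            rw [gauss_integral]
  | succ n ih =>
    set f' : ℝ → ℝ := fun x =>
      (2 * ((n : ℝ) + 1)) * (Hf n x * Hf n x * Real.exp (-x ^ 2)) -
        Hf (n + 1) x * Hf (n + 1) x * Real.exp (-x ^ 2) with hf'def
    have hd : ∀ x : ℝ, HasDerivAt (fun x => Hf (n + 1) x * Hf n x * Real.exp (-x ^ 2)) (f' x) x := by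
      intro x
      have := ((Hf_hasDerivAt (n + 1) x).fun_mul (Hf_hasDerivAt n x)).fun_mul (hasDerivAt_gauss x)
      refine this.congr_deriv ?_
      simp only [hf'def, dH_succ]
      rw [Hf_succ_eq n x]
      push_cast
      ring
    have hint : Integrable f' :=
      ((integrable_HfHf n n).const_mul _).sub (integrable_HfHf (n + 1) (n + 1))
    have h0 := integral_eq_zero_of_hasDerivAt_of_integrable hd hint (integrable_HfHf (n + 1) n)
    rw [hf'def, integral_sub ((integrable_HfHf n n).const_mul _) (integrable_HfHf (n + 1) (n + 1)),
      integral_const_mul, ih] at h0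
    have : ∫ x : ℝ, Hf (n + 1) x * Hf (n + 1) x * Real.exp (-x ^ 2)
        = 2 * ((n : ℝ) + 1) * (2 ^ n * (n.factorial : ℝ) * Real.sqrt π) := by linarith
    rw [this]
    rw [Nat.factorial_succ]
    push_cast
    ring

lemma integrable_half_gauss : Integrable (fun t : ℝ => Real.exp (-t ^ 2 / 2)) := by
  have h1 : Integrable (fun t : ℝ => Real.exp (-(1/2 : ℝ) * t ^ 2)) :=
    integrable_exp_neg_mul_sq (by norm_num)
  have h2 : (fun t : ℝ => Real.exp (-t ^ 2 / 2)) = fun t : ℝ => Real.exp (-(1/2 : ℝ) * t ^ 2) := by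
    funext t; ring_nf
  rw [h2]; exact h1


end HermiteAux

set_option maxHeartbeats 1000000 in
/-- the three-copy rotation matrix element
`⟨m,0,0|U_{π/3}|m,0,0⟩ = (2/3)^m`, where the rotation by `π/3` about the axis
`(1,1,1)/√3` acts by the orthogonal matrix `(1/3)[[2,−1,2],[2,2,−1],[−1,2,2]]`. -/
theorem hermite_three_copy_rotation_matrix_element (m : ℕ) :
    (∫ p : ℝ × ℝ × ℝ,
        hermiteFun m p.1 * hermiteFun 0 p.2.1 * hermiteFun 0 p.2.2 *
          hermiteFun m ((2 * p.1 + 2 * p.2.1 - p.2.2) / 3) *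
          hermiteFun 0 ((-p.1 + 2 * p.2.1 + 2 * p.2.2) / 3) *
          hermiteFun 0 ((2 * p.1 - p.2.1 + 2 * p.2.2) / 3))
      = (2 / 3 : ℝ) ^ m := by
  -- constants
  set cm : ℝ := ((2 : ℝ) ^ m * (m.factorial : ℝ) * Real.sqrt Real.pi) ^ (-(1 / 2 : ℝ)) with hcm
  set c0 : ℝ := ((2 : ℝ) ^ (0:ℕ) * ((0:ℕ).factorial : ℝ) * Real.sqrt Real.pi) ^ (-(1 / 2 : ℝ)) with hc0
  have hpi : (0:ℝ) < Real.sqrt π := Real.sqrt_pos.mpr Real.pi_pos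
  have hbase : (0:ℝ) < (2 : ℝ) ^ m * (m.factorial : ℝ) * Real.sqrt Real.pi := by positivity
  have hcm2 : cm * cm = ((2 : ℝ) ^ m * (m.factorial : ℝ) * Real.sqrt Real.pi)⁻¹ := by
    rw [hcm, ← Real.rpow_add hbase,
      show (-(1/2:ℝ)) + (-(1/2:ℝ)) = -1 by norm_num, Real.rpow_neg_one]
  have hc0' : c0 = (Real.sqrt π) ^ (-(1 / 2 : ℝ)) := by
    rw [hc0]; norm_num
  have hc04 : c0 * c0 * (c0 * c0) = π⁻¹ := by
    rw [hc0', ← Real.rpow_add hpi, ← Real.rpow_add hpi,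
      show (-(1/2:ℝ) + -(1/2) + (-(1/2) + -(1/2))) = -((2:ℕ):ℝ) by norm_num,
      Real.rpow_neg hpi.le, Real.rpow_natCast, Real.sq_sqrt Real.pi_pos.le]
  set A : ℝ := ((2 : ℝ) ^ m * (m.factorial : ℝ) * Real.sqrt Real.pi)⁻¹ * π⁻¹ with hA
  -- the reduced integrand
  set G : ℝ × ℝ × ℝ → ℝ := fun p =>
    Hf m p.1 * Hf m ((2 * p.1 + 2 * p.2.1 - p.2.2) / 3) *
      (Real.exp (-p.1 ^ 2) * (Real.exp (-p.2.1 ^ 2) * Real.exp (-p.2.2 ^ 2))) with hG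
  have key : ∀ p : ℝ × ℝ × ℝ,
      hermiteFun m p.1 * hermiteFun 0 p.2.1 * hermiteFun 0 p.2.2 *
          hermiteFun m ((2 * p.1 + 2 * p.2.1 - p.2.2) / 3) *
          hermiteFun 0 ((-p.1 + 2 * p.2.1 + 2 * p.2.2) / 3) *
          hermiteFun 0 ((2 * p.1 - p.2.1 + 2 * p.2.2) / 3) = A * G p := by
    rintro ⟨x, y, z⟩
    simp only [hermiteFun, physHermite_eq_Hf, Hf_zero, mul_one, hG]
    have hexp : Real.exp (-x ^ 2 / 2) * Real.exp (-y ^ 2 / 2) * Real.exp (-z ^ 2 / 2) *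
        Real.exp (-((2 * x + 2 * y - z) / 3) ^ 2 / 2) *
        Real.exp (-((-x + 2 * y + 2 * z) / 3) ^ 2 / 2) *
        Real.exp (-((2 * x - y + 2 * z) / 3) ^ 2 / 2)
        = Real.exp (-x ^ 2) * (Real.exp (-y ^ 2) * Real.exp (-z ^ 2)) := by
      simp only [← Real.exp_add]
      congr 1
      ring
    calc (cm * Hf m x * Real.exp (-x ^ 2 / 2)) * (c0 * Real.exp (-y ^ 2 / 2)) *
          (c0 * Real.exp (-z ^ 2 / 2)) *
          (cm * Hf m ((2 * x + 2 * y - z) / 3) * Real.exp (-((2 * x + 2 * y - z) / 3) ^ 2 / 2)) *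
          (c0 * Real.exp (-((-x + 2 * y + 2 * z) / 3) ^ 2 / 2)) *
          (c0 * Real.exp (-((2 * x - y + 2 * z) / 3) ^ 2 / 2))
        = (cm * cm * (c0 * c0 * (c0 * c0))) * (Hf m x * Hf m ((2 * x + 2 * y - z) / 3)) *
            (Real.exp (-x ^ 2 / 2) * Real.exp (-y ^ 2 / 2) * Real.exp (-z ^ 2 / 2) *
              Real.exp (-((2 * x + 2 * y - z) / 3) ^ 2 / 2) *
              Real.exp (-((-x + 2 * y + 2 * z) / 3) ^ 2 / 2) *
              Real.exp (-((2 * x - y + 2 * z) / 3) ^ 2 / 2)) := by ring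
    _ = A * (Hf m x * Hf m ((2 * x + 2 * y - z) / 3) *
          (Real.exp (-x ^ 2) * (Real.exp (-y ^ 2) * Real.exp (-z ^ 2)))) := by
        rw [hexp, hcm2, hc04, hA]; ring
  simp only [key]
  rw [integral_const_mul]
  -- continuity of G
  obtain ⟨C, hC0, hC⟩ := Hf_exp_bound m
  have cp1 : Continuous fun p : ℝ × ℝ × ℝ => p.1 := continuous_fst
  have cp2 : Continuous fun p : ℝ × ℝ × ℝ => p.2.1 := continuous_fst.comp continuous_snd
  have cp3 : Continuous fun p : ℝ × ℝ × ℝ => p.2.2 := continuous_snd.comp continuous_snd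
  have cexp : ∀ g : ℝ × ℝ × ℝ → ℝ, Continuous g →
      Continuous fun p : ℝ × ℝ × ℝ => Real.exp (-(g p) ^ 2) := fun g hg =>
    Real.continuous_exp.comp ((hg.pow 2).neg)
  have hGcont : Continuous G := by
    rw [hG]
    refine Continuous.mul (Continuous.mul ?_ ?_) ?_
    · exact (Hf_continuous m).comp cp1
    · exact (Hf_continuous m).comp
        ((((continuous_const.mul cp1).add (continuous_const.mul cp2)).sub cp3).div_const 3)
    · exact (cexp _ cp1).mul ((cexp _ cp2).mul (cexp _ cp3))
  -- gaussian majorants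
  have ig : Integrable (fun t : ℝ => Real.exp (-t ^ 2 / 2)) := integrable_half_gauss
  have i2 : Integrable (fun q : ℝ × ℝ => Real.exp (-q.1 ^ 2 / 2) * Real.exp (-q.2 ^ 2 / 2)) := by
    rw [Measure.volume_eq_prod]
    exact ig.mul_prod ig
  have i3 : Integrable (fun p : ℝ × ℝ × ℝ =>
      Real.exp (-p.1 ^ 2 / 2) * (Real.exp (-p.2.1 ^ 2 / 2) * Real.exp (-p.2.2 ^ 2 / 2))) := by
    rw [Measure.volume_eq_prod]
    exact ig.mul_prod i2
  have husq : ∀ x y z : ℝ, ((2 * x + 2 * y - z) / 3) ^ 2 ≤ x ^ 2 + y ^ 2 + z ^ 2 := by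
    intro x y z
    nlinarith [sq_nonneg (x - y), sq_nonneg (x + 2 * z), sq_nonneg (y + 2 * z)]
  have hGbound : ∀ p : ℝ × ℝ × ℝ, ‖G p‖ ≤ (C * C) *
      (Real.exp (-p.1 ^ 2 / 2) * (Real.exp (-p.2.1 ^ 2 / 2) * Real.exp (-p.2.2 ^ 2 / 2))) := by
    rintro ⟨x, y, z⟩
    rw [Real.norm_eq_abs]
    simp only [hG]
    rw [abs_mul, abs_mul, abs_of_nonneg (by positivity : (0:ℝ) ≤
      Real.exp (-x ^ 2) * (Real.exp (-y ^ 2) * Real.exp (-z ^ 2)))]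
    have hkey : x ^ 2 / 4 + ((2 * x + 2 * y - z) / 3) ^ 2 / 4 + (-x ^ 2 + (-y ^ 2 + -z ^ 2))
        ≤ -x ^ 2 / 2 + (-y ^ 2 / 2 + -z ^ 2 / 2) := by
      nlinarith [husq x y z, sq_nonneg x, sq_nonneg y, sq_nonneg z]
    have em : Real.exp (x ^ 2 / 4) * Real.exp (((2 * x + 2 * y - z) / 3) ^ 2 / 4) *
        (Real.exp (-x ^ 2) * (Real.exp (-y ^ 2) * Real.exp (-z ^ 2)))
        = Real.exp (x ^ 2 / 4 + ((2 * x + 2 * y - z) / 3) ^ 2 / 4 +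
            (-x ^ 2 + (-y ^ 2 + -z ^ 2))) := by
      simp only [← Real.exp_add]
    calc |Hf m x| * |Hf m ((2 * x + 2 * y - z) / 3)| *
          (Real.exp (-x ^ 2) * (Real.exp (-y ^ 2) * Real.exp (-z ^ 2)))
        ≤ (C * Real.exp (x ^ 2 / 4)) * (C * Real.exp (((2 * x + 2 * y - z) / 3) ^ 2 / 4)) *
          (Real.exp (-x ^ 2) * (Real.exp (-y ^ 2) * Real.exp (-z ^ 2))) := by
          apply mul_le_mul_of_nonneg_right ?_ (by positivity)
          exact mul_le_mul (hC x) (hC _) (abs_nonneg _) (by positivity)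
    _ = (C * C) * (Real.exp (x ^ 2 / 4) * Real.exp (((2 * x + 2 * y - z) / 3) ^ 2 / 4) *
          (Real.exp (-x ^ 2) * (Real.exp (-y ^ 2) * Real.exp (-z ^ 2)))) := by ring
    _ = (C * C) * Real.exp (x ^ 2 / 4 + ((2 * x + 2 * y - z) / 3) ^ 2 / 4 +
          (-x ^ 2 + (-y ^ 2 + -z ^ 2))) := by rw [em]
    _ ≤ (C * C) * Real.exp (-x ^ 2 / 2 + (-y ^ 2 / 2 + -z ^ 2 / 2)) := by
        apply mul_le_mul_of_nonneg_left (Real.exp_le_exp.mpr hkey) (by positivity)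
    _ = (C * C) * (Real.exp (-x ^ 2 / 2) * (Real.exp (-y ^ 2 / 2) * Real.exp (-z ^ 2 / 2))) := by
        rw [Real.exp_add, Real.exp_add]
  have hGint : Integrable G :=
    (i3.const_mul (C * C)).mono' hGcont.aestronglyMeasurable
      (by filter_upwards with p; exact hGbound p)
  -- Fubini, outer layer
  have hGint' : Integrable G ((volume : Measure ℝ).prod (volume : Measure (ℝ × ℝ))) := by
    rwa [← Measure.volume_eq_prod]
  have hsplit1 : ∫ p : ℝ × ℝ × ℝ, G p = ∫ x : ℝ, ∫ q : ℝ × ℝ, G (x, q) := by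
    rw [Measure.volume_eq_prod]
    exact integral_prod _ hGint'
  -- per-x integrability and inner Fubini
  have hGx : ∀ x : ℝ, Integrable (fun q : ℝ × ℝ => G (x, q)) := by
    intro x
    have hcx : Continuous fun q : ℝ × ℝ => G (x, q) :=
      hGcont.comp (continuous_const.prodMk continuous_id)
    refine (i2.const_mul (C * C)).mono' hcx.aestronglyMeasurable ?_
    filter_upwards with q
    calc ‖G (x, q)‖ ≤ (C * C) * (Real.exp (-x ^ 2 / 2) *
          (Real.exp (-q.1 ^ 2 / 2) * Real.exp (-q.2 ^ 2 / 2))) := hGbound (x, q)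
    _ ≤ (C * C) * (Real.exp (-q.1 ^ 2 / 2) * Real.exp (-q.2 ^ 2 / 2)) := by
        apply mul_le_mul_of_nonneg_left ?_ (by positivity)
        apply mul_le_of_le_one_left (by positivity)
        exact (Real.exp_le_exp.mpr (by nlinarith [sq_nonneg x] : -x ^ 2 / 2 ≤ 0)).trans_eq
          Real.exp_zero
  have hsplit2 : ∀ x : ℝ, (∫ q : ℝ × ℝ, G (x, q)) = ∫ y : ℝ, ∫ z : ℝ, G (x, (y, z)) := by
    intro x
    have h := hGx x
    rw [Measure.volume_eq_prod] at h ⊢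
    exact integral_prod _ h
  -- the two 1D reductions
  set b1 : ℝ := Real.sqrt 8 / 3 with hb1
  set c2 : ℝ := 2 / Real.sqrt 8 with hc2
  have h8 : (0 : ℝ) < Real.sqrt 8 := Real.sqrt_pos.mpr (by norm_num)
  have hsq8 : Real.sqrt 8 ^ 2 = 8 := Real.sq_sqrt (by norm_num)
  have hab1 : (-(1/3) : ℝ) ^ 2 + b1 ^ 2 = 1 := by
    rw [hb1, div_pow, hsq8]; norm_num
  have habc2 : c2 ^ 2 + c2 ^ 2 = 1 := by
    rw [hc2, div_pow, hsq8]; norm_num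
  have hb1c2 : b1 * c2 = 2 / 3 := by
    rw [hb1, hc2]
    field_simp
  have hz : ∀ x y : ℝ, (∫ z : ℝ, G (x, (y, z))) =
      (Hf m x * (Real.exp (-x ^ 2) * Real.exp (-y ^ 2)) * (Real.sqrt π * b1 ^ m)) *
        Hf m ((2 * x + 2 * y) / Real.sqrt 8) := by
    intro x y
    have hbs : b1 * ((2 * x + 2 * y) / Real.sqrt 8) = (2 * x + 2 * y) / 3 := by
      rw [hb1]
      field_simp
    have hrw : (fun z : ℝ => G (x, (y, z))) = fun z : ℝ =>
        (Hf m x * (Real.exp (-x ^ 2) * Real.exp (-y ^ 2))) *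
          (Hf m ((-(1/3)) * z + b1 * ((2 * x + 2 * y) / Real.sqrt 8)) * Real.exp (-z ^ 2)) := by
      funext z
      simp only [hG]
      rw [show ((2 * x + 2 * y - z) / 3 : ℝ)
        = (-(1/3)) * z + b1 * ((2 * x + 2 * y) / Real.sqrt 8) by rw [hbs]; ring]
      ring
    rw [hrw, integral_const_mul, J_eq m (-(1/3)) b1 ((2 * x + 2 * y) / Real.sqrt 8) hab1]
    ring
  have hy : ∀ x : ℝ, (∫ y : ℝ, ∫ z : ℝ, G (x, (y, z)))
      = (π * (b1 ^ m * c2 ^ m)) * (Hf m x * Hf m x * Real.exp (-x ^ 2)) := by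
    intro x
    have hrw : (fun y : ℝ => ∫ z : ℝ, G (x, (y, z))) = fun y : ℝ =>
        (Hf m x * Real.exp (-x ^ 2) * (Real.sqrt π * b1 ^ m)) *
          (Hf m (c2 * y + c2 * x) * Real.exp (-y ^ 2)) := by
      funext y
      rw [hz x y]
      rw [show ((2 * x + 2 * y) / Real.sqrt 8 : ℝ) = c2 * y + c2 * x by
        rw [hc2]; field_simp; ring]
      ring
    rw [hrw, integral_const_mul, J_eq m c2 c2 x habc2]
    have hss : Real.sqrt π * Real.sqrt π = π := Real.mul_self_sqrt Real.pi_pos.le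
    linear_combination (Hf m x * Hf m x * Real.exp (-x ^ 2) * b1 ^ m * c2 ^ m) * hss
  -- put it together
  have hfin : (fun x : ℝ => ∫ q : ℝ × ℝ, G (x, q)) = fun x : ℝ =>
      (π * (b1 ^ m * c2 ^ m)) * (Hf m x * Hf m x * Real.exp (-x ^ 2)) :=
    funext fun x => by rw [hsplit2 x, hy x]
  rw [hsplit1, hfin, integral_const_mul, K_eq m, ← mul_pow, hb1c2, hA]
  have hfact : ((m.factorial : ℝ)) ≠ 0 := Nat.cast_ne_zero.mpr m.factorial_ne_zero
  field_simp
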